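/- Let Γ_S > 0 and Γ_D > 0. There exists a power allocation ratio a ∈ [0,1] with positive instantaneous secrecy rate C(a) > 0 if and only if Γ_D > 1 + 1/Γ_S. -/

import Mathlib

/-- SINR at the untrusted UAV with power allocation ratio `a`. -/
noncomputable def sinrU (S a : ℝ) : ℝ := a * S / ((1 - a) * S + 1)

/-- SINR at the destination with power allocation ratio `a`. -/
noncomputable def sinrD (S D a : ℝ) : ℝ := a * S * D / (S + D + 1)

/-- Instantaneous secrecy rate. -/
noncomputable def secrecyRate (S D a : ℝ) : ℝ :=
  max 0 (Real.log (1 + sinrD S D a) - Real.log (1 + sinrU S a))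

theorem stmt_6 (S D : ℝ) (hS : 0 < S) (hD : 0 < D) :
    (∃ a ∈ Set.Icc (0 : ℝ) 1, 0 < secrecyRate S D a) ↔ 1 + 1 / S < D := by
  constructor
  · rintro ⟨a, ⟨ha0, ha1⟩, hpos⟩
    have hdenU : 0 < (1 - a) * S + 1 := by nlinarith
    have hdenD : 0 < S + D + 1 := by nlinarith
    have hU0 : 0 ≤ sinrU S a := div_nonneg (by nlinarith) hdenU.le
    have hD0 : 0 ≤ sinrD S D a := div_nonneg (mul_nonneg (mul_nonneg ha0 hS.le) hD.le) hdenD.le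
    have hd : 0 < Real.log (1 + sinrD S D a) - Real.log (1 + sinrU S a) := by
      rcases lt_max_iff.mp hpos with h | h
      · exact absurd h (lt_irrefl 0)
      · exact h
    have hlt : sinrU S a < sinrD S D a := by
      have h2 := (Real.log_lt_log_iff (x := 1 + sinrU S a) (y := 1 + sinrD S D a)
        (by linarith) (by linarith)).mp (by linarith)
      linarith
    have ha0' : 0 < a := by
      by_contra h
      have ha : a = 0 := le_antisymm (not_lt.mp h) ha0
      rw [ha] at hlt
      simp [sinrU, sinrD] at hlt
    rw [sinrU, sinrD, div_lt_div_iff₀ hdenU hdenD] at hlt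
    have key : S + 1 < S * D := by
      nlinarith [mul_pos ha0' hS,
        mul_nonneg (mul_nonneg (mul_nonneg ha0 ha0) (mul_nonneg hS.le hS.le)) hD.le]
    rw [show (1:ℝ) + 1/S = (S+1)/S by field_simp, div_lt_iff₀ hS]
    nlinarith
  · intro h
    have key : S + 1 < S * D := by
      rw [show (1:ℝ) + 1/S = (S+1)/S by field_simp, div_lt_iff₀ hS] at h
      nlinarith
    have hSD : 0 < S * D := mul_pos hS hD
    set a : ℝ := (S * D - S - 1) / (2 * (S * D)) with ha_def
    have ha0 : 0 < a := div_pos (by linarith) (by linarith)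
    have ha1 : a < 1 := by
      rw [div_lt_one (by linarith)]; linarith
    have h1a : 1 - a = (S * D + S + 1) / (2 * (S * D)) := by
      rw [ha_def]; field_simp; ring
    have hdenU : 0 < (1 - a) * S + 1 := by nlinarith
    have hdenD : 0 < S + D + 1 := by nlinarith
    have hlt : sinrU S a < sinrD S D a := by
      rw [sinrU, sinrD, div_lt_div_iff₀ hdenU hdenD]
      have h2 : S + 1 < D * ((1 - a) * S) := by
        rw [h1a]
        rw [show D * ((S * D + S + 1) / (2 * (S * D)) * S) = (S * D + S + 1) / 2 by
          field_simp]
        linarith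
      nlinarith [mul_pos ha0 hS]
    have hU0 : 0 ≤ sinrU S a := div_nonneg (by nlinarith) hdenU.le
    refine ⟨a, ⟨ha0.le, ha1.le⟩, ?_⟩
    have hlog : Real.log (1 + sinrU S a) < Real.log (1 + sinrD S D a) :=
      Real.log_lt_log (by linarith) (by linarith)
    exact lt_max_iff.mpr (Or.inr (by linarith))
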